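/- Let (t_n)_{n≥0} be a strictly increasing sequence with t_n → ∞, M > 0, and B_n = −α Δ_n where Δ_n = t_n − t_{n−1} and α > 0. If there exist 0 < κ < α and constants C ∈ ℝ, n' ≥ 1 such that Δ_{n+1} ≤ (κ/M)(t_n − t₀) + C for all n ≥ n', then Σ_{q=1}^{n} B_q + M Δ_{n+1} = −α(t_n − t₀) + M Δ_{n+1} → −∞ as n → ∞. -/

import Mathlib

open Filter

/-- Proposition 6: With `B n = −α Δ_n`, `Δ_n = t_n − t_{n−1}`, `α > 0`,
`M > 0`, if there are `0 < κ < α`, `C` and `n' ≥ 1` with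
`Δ_{n+1} ≤ (κ/M)(t_n − t₀) + C` for `n ≥ n'`, then
`∑_{q=1}^n B_q + M Δ_{n+1} = −α(t_n − t₀) + M Δ_{n+1} → −∞`. -/
theorem impulsive_growing_gaps_criterion
    (t : ℕ → ℝ) (ht : StrictMono t) (htop : Tendsto t atTop atTop)
    (M α : ℝ) (hM : 0 < M) (hα : 0 < α)
    (B : ℕ → ℝ) (hB : ∀ n : ℕ, 1 ≤ n → B n = -α * (t n - t (n - 1)))
    (κ C : ℝ) (hκ : 0 < κ) (hκα : κ < α) (n' : ℕ) (hn' : 1 ≤ n')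
    (hgap : ∀ n : ℕ, n' ≤ n → t (n + 1) - t n ≤ κ / M * (t n - t 0) + C) :
    (∀ n : ℕ, 1 ≤ n →
      (∑ q ∈ Finset.Icc 1 n, B q) + M * (t (n + 1) - t n) =
        -α * (t n - t 0) + M * (t (n + 1) - t n)) ∧
    Tendsto (fun n => (∑ q ∈ Finset.Icc 1 n, B q) + M * (t (n + 1) - t n))
      atTop atBot := by
  have hsum : ∀ n : ℕ, 1 ≤ n →
      (∑ q ∈ Finset.Icc 1 n, B q) = -α * (t n - t 0) := by
    intro n hn
    have h1 : (∑ q ∈ Finset.Icc 1 n, B q) = ∑ q ∈ Finset.range n, B (q + 1) := by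
      rw [show Finset.Icc 1 n = Finset.Ico 1 (n + 1) by rw [Finset.Ico_add_one_right_eq_Icc],
        Finset.sum_Ico_eq_sum_range]
      simp [add_comm]
    rw [h1]
    have h2 : ∀ q ∈ Finset.range n, B (q + 1) = -α * t (q + 1) - (-α * t q) := by
      intro q _
      rw [hB (q + 1) (by omega)]
      simp
      ring
    rw [Finset.sum_congr rfl h2, Finset.sum_range_sub (fun q => -α * t q)]
    ring
  have heq : ∀ n : ℕ, 1 ≤ n →
      (∑ q ∈ Finset.Icc 1 n, B q) + M * (t (n + 1) - t n) =
        -α * (t n - t 0) + M * (t (n + 1) - t n) := by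
    intro n hn; rw [hsum n hn]
  refine ⟨heq, ?_⟩
  have hbound : ∀ n : ℕ, n' ≤ n →
      (∑ q ∈ Finset.Icc 1 n, B q) + M * (t (n + 1) - t n) ≤
        (κ - α) * (t n - t 0) + M * C := by
    intro n hn
    rw [heq n (le_trans hn' hn)]
    have := hgap n hn
    have hMC : M * (t (n + 1) - t n) ≤ M * (κ / M * (t n - t 0) + C) :=
      mul_le_mul_of_nonneg_left this hM.le
    have hMκ : M * (κ / M * (t n - t 0) + C) = κ * (t n - t 0) + M * C := by
      field_simp
    nlinarith [hMC]
  have haux : Tendsto (fun n => (κ - α) * (t n - t 0) + M * C) atTop atBot := by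
    apply Tendsto.atBot_add _ tendsto_const_nhds
    have h1 : Tendsto (fun n => t n - t 0) atTop atTop :=
      htop.atTop_add tendsto_const_nhds
    exact h1.const_mul_atTop_of_neg (by linarith)
  refine tendsto_atBot_mono' atTop ?_ haux
  filter_upwards [eventually_ge_atTop n'] with n hn
  exact hbound n hn
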